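/- Let φ : X → ℝ ∪ {∞} be a proper lower semicontinuous convex function on a Euclidean space with x̄ ∈ dom φ and v̄ ∈ ∂φ(x̄). If φ satisfies the quadratic growth condition at x̄ for v̄ (equivalently, ∂φ is metrically subregular at x̄ for v̄), then the kernel of the subgradient graphical derivative D∂φ(x̄|v̄) equals the tangent cone T_{∂φ*(v̄)}(x̄), where φ* is the Fenchel conjugate. -/

import Mathlib

open Filter Topology Metric Set
open scoped RealInnerProductSpace NNReal ENNReal

noncomputable section

/-- Bouligand (contingent) tangent cone. -/
def tanCone {G : Type*} [AddCommGroup G] [Module ℝ G] [TopologicalSpace G]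
    (s : Set G) (x : G) : Set G :=
  {w | ∃ (t : ℕ → ℝ) (wk : ℕ → G), (∀ n, 0 < t n) ∧
    Tendsto t atTop (𝓝 0) ∧ Tendsto wk atTop (𝓝 w) ∧ ∀ n, x + t n • wk n ∈ s}

variable {E F : Type*} [NormedAddCommGroup E] [InnerProductSpace ℝ E]
  [NormedAddCommGroup F] [InnerProductSpace ℝ F]

/-- Graph of a set-valued mapping. -/
def gph (S : E → Set F) : Set (E × F) := {p | p.2 ∈ S p.1}

/-- Graphical derivative. -/
def gder (S : E → Set F) (x : E) (y : F) (w : E) : Set F :=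
  {z | (w, z) ∈ tanCone (gph S) (x, y)}

/-- Local closedness of the graph around a point. -/
def LocallyClosedGraph (S : E → Set F) (x : E) (y : F) : Prop :=
  ∃ U ∈ 𝓝 ((x, y) : E × F), IsClosed (U ∩ gph S)

/-- Metric subregularity of a set-valued mapping at `x` for `y`. -/
def MetrSubreg (S : E → Set F) (x : E) (y : F) : Prop :=
  ∃ κ : ℝ≥0, ∃ ε : ℝ, 0 < ε ∧ ∀ x' ∈ ball x ε,
    EMetric.infEdist x' {u | y ∈ S u} ≤ (κ : ℝ≥0∞) * EMetric.infEdist y (S x')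

/-- Convex subdifferential of an extended-real-valued function. -/
def subdiff (φ : E → EReal) (x : E) : Set E :=
  {v | ∀ u, φ x + ((⟪v, u - x⟫ : ℝ) : EReal) ≤ φ u}

/-- Properness. -/
def ProperFn (φ : E → EReal) : Prop := (∀ x, φ x ≠ ⊥) ∧ ∃ x, φ x ≠ ⊤

/-- Convexity via the epigraph. -/
def ConvexFn (φ : E → EReal) : Prop := Convex ℝ {p : E × ℝ | φ p.1 ≤ (p.2 : EReal)}

/-- Fenchel conjugate. -/
def conjFn (φ : E → EReal) (v : E) : EReal := ⨆ x, ((⟪v, x⟫ : ℝ) : EReal) - φ x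

/-- Second subderivative. -/
def secondSubderiv (φ : E → EReal) (x v w : E) : EReal :=
  Filter.liminf (fun p : ℝ × E =>
    (((2 / p.1 ^ 2 : ℝ)) : EReal) *
      (φ (x + p.1 • p.2) - φ x - ((p.1 * ⟪v, p.2⟫ : ℝ) : EReal)))
    ((𝓝[>] (0 : ℝ)) ×ˢ 𝓝 w)

/-- Quadratic growth condition at `x` for `v`. -/
def QuadGrowth (φ : E → EReal) (x v : E) : Prop :=
  ∃ c : ℝ, 0 < c ∧ ∃ ε : ℝ, 0 < ε ∧ ∀ u ∈ ball x ε,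
    φ x + ((⟪v, u - x⟫ + c / 2 * (infDist u {u' | v ∈ subdiff φ u'}) ^ 2 : ℝ) : EReal) ≤ φ u


lemma subdiff_ne_top {φ : E → EReal} (hproper : ProperFn φ) {x v : E}
    (hx : v ∈ subdiff φ x) : φ x ≠ ⊤ := by
  intro h
  obtain ⟨x0, hx0⟩ := hproper.2
  have h1 := hx x0
  rw [h, EReal.top_add_coe] at h1
  exact hx0 (top_le_iff.mp h1)

lemma subdiff_real_ineq {φ : E → EReal} (hproper : ProperFn φ) {x v : E}
    (hx : v ∈ subdiff φ x) {u : E} (hu : φ u ≠ ⊤) :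
    (φ x).toReal + ⟪v, u - x⟫ ≤ (φ u).toReal := by
  have h := hx u
  rw [← EReal.coe_toReal (subdiff_ne_top hproper hx) (hproper.1 x),
    ← EReal.coe_toReal hu (hproper.1 u), ← EReal.coe_add, EReal.coe_le_coe_iff] at h
  exact h

lemma term_le_conj (φ : E → EReal) (v x : E) :
    ((⟪v, x⟫ : ℝ) : EReal) - φ x ≤ conjFn φ v :=
  le_iSup (fun u => ((⟪v, u⟫ : ℝ) : EReal) - φ u) x

lemma term_le_conj_real {φ : E → EReal} (hproper : ProperFn φ) {v : E} {Fv : ℝ}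
    (hFv : conjFn φ v = (Fv : EReal)) {x : E} (hx : φ x ≠ ⊤) :
    ⟪v, x⟫ - (φ x).toReal ≤ Fv := by
  have h := term_le_conj φ v x
  rw [hFv, ← EReal.coe_toReal hx (hproper.1 x), ← EReal.coe_sub, EReal.coe_le_coe_iff] at h
  exact h

lemma conj_eq {φ : E → EReal} (hproper : ProperFn φ) {x v : E}
    (hx : v ∈ subdiff φ x) :
    conjFn φ v = ((⟪v, x⟫ - (φ x).toReal : ℝ) : EReal) := by
  have hxt := subdiff_ne_top hproper hx
  have hxb := hproper.1 x
  have hco : ((φ x).toReal : EReal) = φ x := EReal.coe_toReal hxt hxb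
  apply le_antisymm
  · apply iSup_le
    intro u
    by_cases hu : φ u = ⊤
    · rw [hu]
      simp
    · have h := subdiff_real_ineq hproper hx hu
      have h2 : ⟪v, u - x⟫ = ⟪v, u⟫ - ⟪v, x⟫ := inner_sub_right v u x
      rw [← EReal.coe_toReal hu (hproper.1 u), ← EReal.coe_sub]
      exact EReal.coe_le_coe_iff.mpr (by linarith)
  · have heq : ((⟪v, x⟫ - (φ x).toReal : ℝ) : EReal) = ((⟪v, x⟫ : ℝ) : EReal) - φ x := by
      rw [EReal.coe_sub, hco]
    rw [heq]
    exact term_le_conj φ v x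

lemma mem_subdiff_conj {φ : E → EReal} (hproper : ProperFn φ) {x v : E}
    (hx : v ∈ subdiff φ x) : x ∈ subdiff (conjFn φ) v := by
  intro p
  rw [conj_eq hproper hx, ← EReal.coe_add]
  refine le_trans ?_ (term_le_conj φ p x)
  have hgoal : ⟪v, x⟫ - (φ x).toReal + ⟪x, p - v⟫ ≤ ⟪p, x⟫ - (φ x).toReal := by
    have h2 : ⟪x, p - v⟫ = ⟪x, p⟫ - ⟪x, v⟫ := inner_sub_right x p v
    have h3 : ⟪p, x⟫ = ⟪x, p⟫ := real_inner_comm x p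
    have h4 : ⟪v, x⟫ = ⟪x, v⟫ := real_inner_comm x v
    linarith
  calc ((⟪v, x⟫ - (φ x).toReal : ℝ) : EReal) + ((⟪x, p - v⟫ : ℝ) : EReal)
      ≤ ((⟪p, x⟫ - (φ x).toReal : ℝ) : EReal) := by
        rw [← EReal.coe_add]; exact EReal.coe_le_coe_iff.mpr hgoal
    _ = ((⟪p, x⟫ : ℝ) : EReal) - φ x := by
        rw [EReal.coe_sub, EReal.coe_toReal (subdiff_ne_top hproper hx) (hproper.1 x)]

lemma mem_subdiff_of_mem_conj_subdiff {E : Type*} [NormedAddCommGroup E]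
    [InnerProductSpace ℝ E] [FiniteDimensional ℝ E]
    {φ : E → EReal} (hproper : ProperFn φ) (hlsc : LowerSemicontinuous φ)
    (hconv : ConvexFn φ) {xb vb u : E} (hxb : vb ∈ subdiff φ xb)
    (h : u ∈ subdiff (conjFn φ) vb) : vb ∈ subdiff φ u := by
  haveI : CompleteSpace E := FiniteDimensional.complete ℝ E
  set Fv : ℝ := ⟪vb, xb⟫ - (φ xb).toReal with hFv_def
  have hFv : conjFn φ vb = (Fv : EReal) := conj_eq hproper hxb
  set m : ℝ := ⟪vb, u⟫ - Fv with hm_def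
  -- Step A : φ u ≤ m
  have hstepA : φ u ≤ (m : EReal) := by
    by_contra hm
    set epi : Set (E × ℝ) := {p : E × ℝ | φ p.1 ≤ (p.2 : EReal)} with hepi_def
    have hepi_closed : IsClosed epi := by
      have h1 : IsClosed {p : E × EReal | φ p.1 ≤ p.2} :=
        lowerSemicontinuous_iff_isClosed_epigraph.mp hlsc
      have h2 : Continuous (fun p : E × ℝ => (p.1, (p.2 : EReal))) :=
        continuous_fst.prodMk (continuous_coe_real_ereal.comp continuous_snd)
      exact h1.preimage h2
    have hnot : (u, m) ∉ epi := hm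
    obtain ⟨f, s, hfs, hsep⟩ := geometric_hahn_banach_point_closed hconv hepi_closed hnot
    set a : E := (InnerProductSpace.toDual ℝ E).symm (f.comp (ContinuousLinearMap.inl ℝ E ℝ)) with ha_def
    have ha : ∀ x : E, ⟪a, x⟫ = f (x, 0) := by
      intro x
      simp [ha_def, InnerProductSpace.toDual_symm_apply]
    set b : ℝ := f (0, 1) with hb_def
    have hf : ∀ (x : E) (t : ℝ), f (x, t) = ⟪a, x⟫ + t * b := by
      intro x t
      have hxt : ((x, t) : E × ℝ) = (x, 0) + t • ((0 : E), (1 : ℝ)) := by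
        simp [Prod.ext_iff]
      rw [hxt, map_add, map_smul, ha]
      simp [smul_eq_mul, hb_def]
    have hmem_epi : ∀ x : E, φ x ≠ ⊤ → s < ⟪a, x⟫ + (φ x).toReal * b := by
      intro x hx
      have hx_epi : (x, (φ x).toReal) ∈ epi := by
        simp only [hepi_def, mem_setOf_eq, EReal.coe_toReal hx (hproper.1 x), le_refl]
      have := hsep _ hx_epi
      rwa [hf] at this
    have hum : ⟪a, u⟫ + m * b < s := by rw [← hf]; exact hfs
    obtain ⟨x0, hx0⟩ := hproper.2
    have hbnn : 0 ≤ b := by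
      by_contra hb
      push_neg at hb
      set t0 : ℝ := max ((φ x0).toReal) ((s - ⟪a, x0⟫) / b) with ht0_def
      have hmem : (x0, t0) ∈ epi := by
        simp only [hepi_def, mem_setOf_eq]
        rw [← EReal.coe_toReal hx0 (hproper.1 x0)]
        exact EReal.coe_le_coe_iff.mpr (le_max_left _ _)
      have hs := hsep _ hmem
      rw [hf] at hs
      have ht0 : (s - ⟪a, x0⟫) / b ≤ t0 := le_max_right _ _
      have hmul := mul_le_mul_of_nonpos_right ht0 hb.le
      rw [div_mul_cancel₀ _ (ne_of_lt hb)] at hmul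
      linarith
    rcases eq_or_lt_of_le hbnn with hb0 | hbpos
    · -- b = 0
      have haus : ⟪a, u⟫ < s := by
        have h7 := hum; rw [← hb0] at h7; simpa using h7
      have hdom : ∀ x : E, φ x ≠ ⊤ → s < ⟪a, x⟫ := by
        intro x hx; have h7 := hmem_epi x hx; rw [← hb0] at h7; simpa using h7
      have hc1 : conjFn φ (vb - a) ≤ ((Fv - s : ℝ) : EReal) := by
        apply iSup_le; intro x
        by_cases hx : φ x = ⊤
        · rw [hx]; simp
        · rw [← EReal.coe_toReal hx (hproper.1 x), ← EReal.coe_sub]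
          apply EReal.coe_le_coe_iff.mpr
          have h1 := hdom x hx
          have h2 := term_le_conj_real hproper hFv hx
          have h3 : ⟪vb - a, x⟫ = ⟪vb, x⟫ - ⟪a, x⟫ := inner_sub_left vb a x
          linarith
      have h4 := h (vb - a)
      rw [hFv] at h4
      have h5 := le_trans h4 hc1
      rw [← EReal.coe_add, EReal.coe_le_coe_iff] at h5
      have h6 : ⟪u, vb - a - vb⟫ = -⟪a, u⟫ := by
        have h8 : vb - a - vb = -a := by abel
        rw [h8, inner_neg_right, real_inner_comm]
      rw [h6] at h5
      linarith
    · -- b > 0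
      have hbne : b ≠ 0 := ne_of_gt hbpos
      set p : E := (-b⁻¹) • a with hp_def
      have hpx : ∀ x : E, ⟪p, x⟫ = -b⁻¹ * ⟪a, x⟫ := fun x => real_inner_smul_left a x _
      have hc1 : conjFn φ p ≤ ((-(s / b) : ℝ) : EReal) := by
        apply iSup_le; intro x
        by_cases hx : φ x = ⊤
        · rw [hx]; simp
        · rw [← EReal.coe_toReal hx (hproper.1 x), ← EReal.coe_sub]
          apply EReal.coe_le_coe_iff.mpr
          have h1 := hmem_epi x hx
          rw [hpx]
          have hinv : b⁻¹ * b = 1 := inv_mul_cancel₀ hbne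
          have hexp : (b⁻¹ * ⟪a, x⟫ + (φ x).toReal) * b = ⟪a, x⟫ + (φ x).toReal * b := by
            field_simp
          have key : s / b < b⁻¹ * ⟪a, x⟫ + (φ x).toReal := by
            rw [div_lt_iff₀ hbpos, hexp]; exact h1
          linarith
      have h4 := h p
      rw [hFv] at h4
      have h5 := le_trans h4 hc1
      rw [← EReal.coe_add, EReal.coe_le_coe_iff] at h5
      have h6 : ⟪u, p - vb⟫ = -b⁻¹ * ⟪a, u⟫ - ⟪vb, u⟫ := by
        rw [inner_sub_right, real_inner_comm p u, hpx, real_inner_comm vb u]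
      rw [h6] at h5
      -- Fv + (-b⁻¹ ⟪a,u⟫ - ⟪vb,u⟫) ≤ -(s/b)
      have hmul := mul_le_mul_of_nonneg_right h5 hbpos.le
      have hinv : b⁻¹ * b = 1 := inv_mul_cancel₀ hbne
      have hsb : -(s / b) * b = -s := by field_simp
      have hexp2 : (Fv + (-b⁻¹ * ⟪a, u⟫ - ⟪vb, u⟫)) * b = Fv * b - ⟪a, u⟫ - ⟪vb, u⟫ * b := by
        field_simp; ring
      rw [hexp2, hsb] at hmul
      rw [hm_def] at hum
      nlinarith [hmul, hum]
  -- Step B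
  intro x
  by_cases hx : φ x = ⊤
  · rw [hx]; exact le_top
  · have hu_ne_top : φ u ≠ ⊤ := fun hq => by simp [hq] at hstepA
    rw [← EReal.coe_toReal hx (hproper.1 x), ← EReal.coe_toReal hu_ne_top (hproper.1 u),
      ← EReal.coe_add]
    apply EReal.coe_le_coe_iff.mpr
    have h1 : (φ u).toReal ≤ m := by
      rw [← EReal.coe_le_coe_iff, EReal.coe_toReal hu_ne_top (hproper.1 u)]
      exact hstepA
    have h2 := term_le_conj_real hproper hFv hx
    have h3 : ⟪vb, x - u⟫ = ⟪vb, x⟫ - ⟪vb, u⟫ := inner_sub_right vb x u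
    rw [hm_def] at h1
    linarith

/-- under the quadratic growth condition, the kernel of the subgradient
graphical derivative equals the tangent cone to `∂φ*(vb)` at `xb`. -/
theorem stmt2 {E : Type*} [NormedAddCommGroup E] [InnerProductSpace ℝ E]
    [FiniteDimensional ℝ E]
    (φ : E → EReal) (hproper : ProperFn φ) (hlsc : LowerSemicontinuous φ)
    (hconv : ConvexFn φ) (xb vb : E) (hsub : vb ∈ subdiff φ xb)
    (hqg : QuadGrowth φ xb vb) :
    {w | (0 : E) ∈ gder (subdiff φ) xb vb w} = tanCone (subdiff (conjFn φ) vb) xb := by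
  ext w
  simp only [mem_setOf_eq, gder, tanCone, gph]
  constructor
  · rintro ⟨t, p, htpos, ht0, hp, hmem⟩
    obtain ⟨c, hc, ε, hε, hQG⟩ := hqg
    set S : Set E := {u' | vb ∈ subdiff φ u'} with hS_def
    have hSne : S.Nonempty := ⟨xb, hsub⟩
    set wn : ℕ → E := fun n => (p n).1 with hwn_def
    set zn : ℕ → E := fun n => (p n).2 with hzn_def
    have hw1 : Tendsto wn atTop (𝓝 w) := (continuous_fst.tendsto _).comp hp
    have hz1 : Tendsto zn atTop (𝓝 0) := (continuous_snd.tendsto _).comp hp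
    set δ : ℕ → ℝ := fun n => Real.sqrt (2 / c * (‖zn n‖ * ‖wn n‖)) with hδ_def
    have hδnn : ∀ n, 0 ≤ δ n := fun n => Real.sqrt_nonneg _
    have hδ0 : Tendsto δ atTop (𝓝 0) := by
      have h1 : Tendsto (fun n => 2 / c * (‖zn n‖ * ‖wn n‖)) atTop
          (𝓝 (2 / c * (‖(0 : E)‖ * ‖w‖))) :=
        tendsto_const_nhds.mul ((hz1.norm).mul (hw1.norm))
      rw [norm_zero, zero_mul, mul_zero] at h1
      have h2 := (Real.continuous_sqrt.tendsto 0).comp h1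
      simpa [hδ_def, Real.sqrt_zero, Function.comp_def] using h2
    have hxb_ne_top : φ xb ≠ ⊤ := subdiff_ne_top hproper hsub
    have hkey : ∀ n, t n * ‖wn n‖ < ε → infDist (xb + t n • wn n) S ≤ t n * δ n := by
      intro n hn
      set u : E := xb + t n • wn n with hu_def
      have hball : u ∈ ball xb ε := by
        rw [mem_ball, dist_eq_norm]
        have : u - xb = t n • wn n := by rw [hu_def]; abel
        rw [this, norm_smul, Real.norm_eq_abs, abs_of_pos (htpos n)]
        exact hn
      have hsub_u : vb + t n • zn n ∈ subdiff φ u := by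
        have h3 := hmem n
        simpa only [mem_setOf_eq, Prod.snd_add, Prod.smul_snd, Prod.fst_add,
          Prod.smul_fst] using h3
      have hu_ne_top : φ u ≠ ⊤ := subdiff_ne_top hproper hsub_u
      have hQGu := hQG u hball
      rw [← EReal.coe_toReal hxb_ne_top (hproper.1 xb),
        ← EReal.coe_toReal hu_ne_top (hproper.1 u), ← EReal.coe_add,
        EReal.coe_le_coe_iff] at hQGu
      have hs := subdiff_real_ineq hproper hsub_u (u := xb) hxb_ne_top
      have e1 : u - xb = t n • wn n := by rw [hu_def]; abel
      have e2 : ⟪vb + t n • zn n, xb - u⟫ = -⟪vb, u - xb⟫ - ⟪t n • zn n, u - xb⟫ := by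
        have : xb - u = -(u - xb) := by abel
        rw [this, inner_neg_right, inner_add_left]
        ring
      have hil : c / 2 * (infDist u S) ^ 2 ≤ ⟪t n • zn n, t n • wn n⟫ := by
        rw [← e1]
        have := hQGu
        rw [e2] at hs
        linarith
      have e3 : ⟪t n • zn n, t n • wn n⟫ ≤ t n ^ 2 * (‖zn n‖ * ‖wn n‖) := by
        rw [real_inner_smul_left, real_inner_smul_right]
        have h4 := real_inner_le_norm (zn n) (wn n)
        have h5 := (htpos n).le
        nlinarith
      have hδsq : δ n ^ 2 = 2 / c * (‖zn n‖ * ‖wn n‖) := by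
        rw [hδ_def]
        exact Real.sq_sqrt (by positivity)
      have hd2 : infDist u S ^ 2 ≤ (t n * δ n) ^ 2 := by
        have : (t n * δ n) ^ 2 = t n ^ 2 * δ n ^ 2 := by ring
        rw [this, hδsq]
        have h6 : c / 2 * (infDist u S) ^ 2 ≤ t n ^ 2 * (‖zn n‖ * ‖wn n‖) :=
          le_trans hil e3
        have h7 : t n ^ 2 * (2 / c * (‖zn n‖ * ‖wn n‖)) =
            2 / c * (t n ^ 2 * (‖zn n‖ * ‖wn n‖)) := by ring
        rw [h7]
        have h8 : 2 / c * (c / 2 * infDist u S ^ 2) = infDist u S ^ 2 := by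
          field_simp
        have h9 := mul_le_mul_of_nonneg_left h6 (by positivity : (0 : ℝ) ≤ 2 / c)
        rw [h8] at h9
        exact h9
      calc infDist u S = Real.sqrt (infDist u S ^ 2) :=
            (Real.sqrt_sq infDist_nonneg).symm
        _ ≤ Real.sqrt ((t n * δ n) ^ 2) := Real.sqrt_le_sqrt hd2
        _ = t n * δ n := Real.sqrt_sq (mul_nonneg (htpos n).le (hδnn n))
    have hev : ∀ᶠ n in atTop, t n * ‖wn n‖ < ε := by
      have h1 : Tendsto (fun n => t n * ‖wn n‖) atTop (𝓝 (0 * ‖w‖)) := ht0.mul hw1.norm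
      rw [zero_mul] at h1
      exact h1.eventually_lt_const hε
    obtain ⟨N, hN⟩ := eventually_atTop.mp hev
    have hchoice : ∀ n : ℕ, ∃ y ∈ S, dist (xb + t (n + N) • wn (n + N)) y <
        t (n + N) * (δ (n + N) + ((n : ℝ) + 1)⁻¹) := by
      intro n
      apply (infDist_lt_iff hSne).mp
      have h1 := hkey (n + N) (hN (n + N) (Nat.le_add_left N n))
      have h2 : t (n + N) * δ (n + N) < t (n + N) * (δ (n + N) + ((n : ℝ) + 1)⁻¹) := by
        apply mul_lt_mul_of_pos_left _ (htpos _)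
        have : (0 : ℝ) < ((n : ℝ) + 1)⁻¹ := by positivity
        linarith
      linarith
    choose y hyS hyd using hchoice
    refine ⟨fun n => t (n + N), fun n => (t (n + N))⁻¹ • (y n - xb),
      fun n => htpos _, ht0.comp (tendsto_add_atTop_nat N), ?_, ?_⟩
    · have hdiff : Tendsto (fun n => (t (n + N))⁻¹ • (y n - xb) - wn (n + N)) atTop
          (𝓝 0) := by
        apply squeeze_zero_norm (a := fun n => δ (n + N) + ((n : ℝ) + 1)⁻¹)
        · intro n
          have htp := htpos (n + N)
          have heq : (t (n + N))⁻¹ • (y n - xb) - wn (n + N) =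
              (t (n + N))⁻¹ • (y n - (xb + t (n + N) • wn (n + N))) := by
            simp only [smul_sub, smul_add, smul_smul]
            rw [inv_mul_cancel₀ (ne_of_gt htp), one_smul]
            abel
          rw [heq, norm_smul, Real.norm_eq_abs, abs_of_pos (inv_pos.mpr htp)]
          have h8 : ‖y n - (xb + t (n + N) • wn (n + N))‖ <
              t (n + N) * (δ (n + N) + ((n : ℝ) + 1)⁻¹) := by
            rw [← dist_eq_norm, dist_comm]
            exact hyd n
          rw [inv_mul_le_iff₀ htp]
          exact h8.le
        · have h1 : Tendsto (fun n => δ (n + N)) atTop (𝓝 0) :=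
            hδ0.comp (tendsto_add_atTop_nat N)
          have h2 : Tendsto (fun n : ℕ => ((n : ℝ) + 1)⁻¹) atTop (𝓝 0) := by
            simpa [one_div] using (tendsto_one_div_add_atTop_nhds_zero_nat :
              Tendsto (fun n : ℕ => 1 / ((n : ℝ) + 1)) atTop (𝓝 0))
          simpa using h1.add h2
      have h9 := hdiff.add (hw1.comp (tendsto_add_atTop_nat N))
      rw [zero_add] at h9
      refine h9.congr fun n => ?_
      simp only [Function.comp]
      abel
    · intro n
      have heq : xb + t (n + N) • (t (n + N))⁻¹ • (y n - xb) = y n := by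
        rw [smul_smul, mul_inv_cancel₀ (ne_of_gt (htpos _)), one_smul]
        abel
      rw [heq]
      exact mem_subdiff_conj hproper (hyS n)
  · rintro ⟨t, wk, htpos, ht0, hwk, hmem⟩
    refine ⟨t, fun n => (wk n, 0), htpos, ht0,
      hwk.prodMk_nhds tendsto_const_nhds, fun n => ?_⟩
    have h1 : vb ∈ subdiff φ (xb + t n • wk n) :=
      mem_subdiff_of_mem_conj_subdiff hproper hlsc hconv hsub (hmem n)
    simpa only [mem_setOf_eq, Prod.snd_add, Prod.smul_snd, Prod.fst_add, Prod.smul_fst,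
      Prod.mk_add_mk, Prod.smul_mk, smul_zero, add_zero] using h1

end
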